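/- Let H be a real Hilbert space, R ⊆ H with ‖r‖ ≤ 1 for all r ∈ R, ε ∈ (0,1], k ≥ 1, and x, z ∈ H with ‖x − z‖ < ε^{1/ε}. Then for every t ∈ [ε,2] and all pairwise orthogonal nonzero r₁,…,r_k ∈ R, with p = 2/(2−t) and ρ = ‖(‖r₁‖^t,…,‖r_k‖^t)‖_p, one has ∑_{i=1}^k |⟨r_i, x−z⟩|^t ≤ (1+ρ)‖x−z‖^ε < ε(1+ρ). -/

import Mathlib

open scoped RealInnerProductSpace

/-- The `L^p` norm of the vector `(‖r₁‖^t, …, ‖r_k‖^t)` with `p = 2/(2-t)`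
(the `L^∞` norm, i.e. the maximum, when `t = 2`). -/
noncomputable def pNorm {H : Type*} [NormedAddCommGroup H] [InnerProductSpace ℝ H]
    {k : ℕ} (t : ℝ) (r : Fin k → H) : ℝ :=
  if t < 2 then (∑ i, ‖r i‖ ^ (t * (2 / (2 - t)))) ^ ((2 - t) / 2)
  else ⨆ i, ‖r i‖ ^ t

theorem stmt19 {H : Type*} [NormedAddCommGroup H] [InnerProductSpace ℝ H] [CompleteSpace H]
    (R : Set H) (hR : ∀ r ∈ R, ‖r‖ ≤ 1)
    (ε : ℝ) (hε0 : 0 < ε) (hε1 : ε ≤ 1) (k : ℕ) (hk : 1 ≤ k)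
    (x z : H) (hxz : ‖x - z‖ < ε ^ (1 / ε))
    (t : ℝ) (ht : t ∈ Set.Icc ε 2)
    (r : Fin k → H) (hrR : ∀ i, r i ∈ R)
    (horth : ∀ i j, i ≠ j → ⟪r i, r j⟫ = 0) (hne : ∀ i, r i ≠ 0) :
    ∑ i, |⟪r i, x - z⟫| ^ t ≤ (1 + pNorm t r) * ‖x - z‖ ^ ε ∧
    (1 + pNorm t r) * ‖x - z‖ ^ ε < ε * (1 + pNorm t r) := by
  have hkne : Nonempty (Fin k) := ⟨⟨0, hk⟩⟩
  set y := x - z with hy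
  obtain ⟨htε, ht2⟩ := ht
  have ht0 : 0 < t := lt_of_lt_of_le hε0 htε
  -- pNorm is nonnegative
  have hρ : 0 ≤ pNorm t r := by
    unfold pNorm
    split
    · exact Real.rpow_nonneg (Finset.sum_nonneg fun i _ => Real.rpow_nonneg (norm_nonneg _) _) _
    · exact Real.iSup_nonneg fun i => Real.rpow_nonneg (norm_nonneg _) _
  have h1ρ : 0 < 1 + pNorm t r := by linarith
  -- ‖y‖ < ε^(1/ε) ≤ 1
  have hεpow1 : ε ^ (1 / ε) ≤ 1 :=
    Real.rpow_le_one hε0.le hε1 (by positivity)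
  have hy1 : ‖y‖ ≤ 1 := le_of_lt (lt_of_lt_of_le hxz hεpow1)
  -- orthonormal family
  set s : Fin k → H := fun i => (‖r i‖)⁻¹ • r i with hs
  have hnorm_pos : ∀ i, 0 < ‖r i‖ := fun i => norm_pos_iff.mpr (hne i)
  have hson : Orthonormal ℝ s := by
    rw [orthonormal_iff_ite]
    intro i j
    simp only [hs, real_inner_smul_left, real_inner_smul_right]
    by_cases hij : i = j
    · subst hij
      rw [real_inner_self_eq_norm_sq]
      field_simp
      rw [div_self (hnorm_pos i).ne', if_pos trivial]
    · simp [hij, horth i j hij]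
  -- Bessel
  have hbes : ∑ i, ⟪s i, y⟫ ^ 2 ≤ ‖y‖ ^ 2 := by
    have := hson.sum_inner_products_le (s := Finset.univ) y
    simpa [Real.norm_eq_abs, sq_abs] using this
  -- rewrite inner products
  have hinner : ∀ i, ⟪r i, y⟫ = ‖r i‖ * ⟪s i, y⟫ := by
    intro i
    simp only [hs, real_inner_smul_left]
    rw [← mul_assoc, mul_inv_cancel₀ (hnorm_pos i).ne', one_mul]
  have habs : ∀ i, |⟪r i, y⟫| ^ t = ‖r i‖ ^ t * |⟪s i, y⟫| ^ t := by
    intro i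
    rw [hinner i, abs_mul, abs_of_nonneg (norm_nonneg _),
      Real.mul_rpow (norm_nonneg _) (abs_nonneg _)]
  -- main bound : key : ∑ ≤ pNorm * ‖y‖^t
  have key : ∑ i, |⟪r i, y⟫| ^ t ≤ pNorm t r * ‖y‖ ^ t := by
    rcases lt_or_eq_of_le ht2 with h2 | h2
    · -- t < 2 : Hölder
      have hp2 : (0:ℝ) < 2 - t := by linarith
      have hpq : Real.HolderConjugate (2 / (2 - t)) (2 / t) := by
        rw [Real.holderConjugate_iff]
        constructor
        · rw [lt_div_iff₀ hp2]; linarith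
        · field_simp; ring
      have hH := Real.inner_le_Lp_mul_Lq_of_nonneg (s := Finset.univ)
        (f := fun i => ‖r i‖ ^ t) (g := fun i => |⟪s i, y⟫| ^ t) hpq
        (fun i _ => Real.rpow_nonneg (norm_nonneg _) _)
        (fun i _ => Real.rpow_nonneg (abs_nonneg _) _)
      have e1 : ∀ i : Fin k, (‖r i‖ ^ t) ^ (2 / (2 - t)) = ‖r i‖ ^ (t * (2 / (2 - t))) :=
        fun i => (Real.rpow_mul (norm_nonneg _) _ _).symm
      have e2 : ∀ i : Fin k, (|⟪s i, y⟫| ^ t) ^ (2 / t) = ⟪s i, y⟫ ^ 2 := by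
        intro i
        rw [← Real.rpow_mul (abs_nonneg _)]
        have h : t * (2 / t) = 2 := by field_simp
        rw [h, Real.rpow_two, sq_abs]
      calc ∑ i, |⟪r i, y⟫| ^ t = ∑ i, ‖r i‖ ^ t * |⟪s i, y⟫| ^ t :=
            Finset.sum_congr rfl fun i _ => habs i
        _ ≤ (∑ i, (‖r i‖ ^ t) ^ (2 / (2 - t))) ^ (1 / (2 / (2 - t))) *
              (∑ i, (|⟪s i, y⟫| ^ t) ^ (2 / t)) ^ (1 / (2 / t)) := hH
        _ = pNorm t r * (∑ i, ⟪s i, y⟫ ^ 2) ^ (t / 2) := by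
            simp_rw [e1, e2]
            rw [one_div_div, one_div_div]
            unfold pNorm
            rw [if_pos h2]
        _ ≤ pNorm t r * ‖y‖ ^ t := by
            refine mul_le_mul_of_nonneg_left ?_ hρ
            have hle : (∑ i, ⟪s i, y⟫ ^ 2) ^ (t / 2) ≤ ((‖y‖ : ℝ) ^ 2) ^ (t / 2) :=
              Real.rpow_le_rpow (Finset.sum_nonneg fun i _ => sq_nonneg _) hbes (by positivity)
            calc (∑ i, ⟪s i, y⟫ ^ 2) ^ (t / 2) ≤ ((‖y‖ : ℝ) ^ 2) ^ (t / 2) := hle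
              _ = ‖y‖ ^ t := by
                  rw [← Real.rpow_two, ← Real.rpow_mul (norm_nonneg _)]
                  congr 1
                  ring
    · -- t = 2
      subst h2
      have : ∀ i, |⟪r i, y⟫| ^ (2 : ℝ) ≤ pNorm 2 r * ⟪s i, y⟫ ^ 2 := by
        intro i
        rw [habs i]
        have h1 : ‖r i‖ ^ (2 : ℝ) ≤ pNorm 2 r := by
          unfold pNorm
          rw [if_neg (lt_irrefl 2)]
          exact le_ciSup (f := fun i => ‖r i‖ ^ (2:ℝ)) (Set.Finite.bddAbove (Set.finite_range _)) i
        have h2 : |⟪s i, y⟫| ^ (2 : ℝ) = ⟪s i, y⟫ ^ 2 := by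
          rw [Real.rpow_two, sq_abs]
        rw [h2]
        exact mul_le_mul_of_nonneg_right h1 (sq_nonneg _)
      calc ∑ i, |⟪r i, y⟫| ^ (2 : ℝ) ≤ ∑ i, pNorm 2 r * ⟪s i, y⟫ ^ 2 :=
            Finset.sum_le_sum fun i _ => this i
        _ = pNorm 2 r * ∑ i, ⟪s i, y⟫ ^ 2 := by rw [Finset.mul_sum]
        _ ≤ pNorm 2 r * ‖y‖ ^ 2 := mul_le_mul_of_nonneg_left hbes hρ
        _ = pNorm 2 r * ‖y‖ ^ (2 : ℝ) := by rw [Real.rpow_two]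
  -- ‖y‖^t ≤ ‖y‖^ε
  have hyt : ‖y‖ ^ t ≤ ‖y‖ ^ ε := by
    rcases eq_or_lt_of_le (norm_nonneg y) with h0 | h0
    · rw [← h0, Real.zero_rpow ht0.ne', Real.zero_rpow hε0.ne']
    · exact Real.rpow_le_rpow_of_exponent_ge h0 hy1 htε
  -- ‖y‖^ε < ε
  have hyε : ‖y‖ ^ ε < ε := by
    calc ‖y‖ ^ ε < (ε ^ (1 / ε)) ^ ε :=
          Real.rpow_lt_rpow (norm_nonneg _) hxz hε0
      _ = ε := by
          rw [← Real.rpow_mul hε0.le, one_div, inv_mul_cancel₀ hε0.ne', Real.rpow_one]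
  constructor
  · calc ∑ i, |⟪r i, y⟫| ^ t ≤ pNorm t r * ‖y‖ ^ t := key
      _ ≤ pNorm t r * ‖y‖ ^ ε := mul_le_mul_of_nonneg_left hyt hρ
      _ ≤ (1 + pNorm t r) * ‖y‖ ^ ε :=
          mul_le_mul_of_nonneg_right (by linarith) (Real.rpow_nonneg (norm_nonneg _) _)
  · calc (1 + pNorm t r) * ‖y‖ ^ ε < (1 + pNorm t r) * ε :=
          mul_lt_mul_of_pos_left hyε h1ρ
      _ = ε * (1 + pNorm t r) := mul_comm _ _
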